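/- Let (B, ν) and (X, μ) be probability spaces, where X is a second-countable metrizable topological space equipped with its Borel σ-algebra. Let f : B × X → ℝ be a bounded measurable function. Assume that for every bounded measurable y : X → ℝ there exists a constant c ∈ ℝ such that ∫_X y(x) f(b, x) dμ(x) = c for ν-almost every b ∈ B. Then there exists a bounded measurable function f₀ : X → ℝ such that f(b, x) = f₀(x) for (ν × μ)-almost every (b, x) ∈ B × X. -/

import Mathlib

open MeasureTheory

lemma countable_generatePiSystem_aux {α : Type*} {S : Set (Set α)} (h : S.Countable) :
    (generatePiSystem S).Countable := by
  have hsub : generatePiSystem S ⊆ Set.sInter '' {t : Set (Set α) | t.Finite ∧ t ⊆ S} := by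
    intro s hs
    induction hs with
    | base h_s =>
      exact ⟨{_}, ⟨Set.finite_singleton _, Set.singleton_subset_iff.2 h_s⟩,
        Set.sInter_singleton _⟩
    | inter h_s h_t h_ne ih_s ih_t =>
      obtain ⟨F, ⟨hFfin, hFsub⟩, rfl⟩ := ih_s
      obtain ⟨G, ⟨hGfin, hGsub⟩, rfl⟩ := ih_t
      exact ⟨F ∪ G, ⟨hFfin.union hGfin, Set.union_subset hFsub hGsub⟩,
        (Set.sInter_union F G).symm ▸ rfl⟩
  exact Set.Countable.mono hsub ((Set.countable_setOf_finite_subset h).image _)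

/-- Commutative instance of Proposition 2.6: a bounded measurable function
`f : B × X → ℝ` all of whose slice pairings against bounded measurable test functions
on `X` are essentially constant in `b` is almost everywhere independent of `b`. -/
theorem stmt_6 {B : Type*} [MeasurableSpace B] (ν : Measure B) [IsProbabilityMeasure ν]
    {X : Type*} [TopologicalSpace X] [SecondCountableTopology X]
    [TopologicalSpace.MetrizableSpace X] [MeasurableSpace X] [BorelSpace X]
    (μ : Measure X) [IsProbabilityMeasure μ]
    (f : B × X → ℝ) (hf : Measurable f) (hfbdd : ∃ C : ℝ, ∀ p, |f p| ≤ C)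
    (hconst : ∀ y : X → ℝ, Measurable y → (∃ C : ℝ, ∀ x, |y x| ≤ C) →
      ∃ c : ℝ, ∀ᵐ b ∂ν, ∫ x, y x * f (b, x) ∂μ = c) :
    ∃ f₀ : X → ℝ, Measurable f₀ ∧ (∃ C : ℝ, ∀ x, |f₀ x| ≤ C) ∧
      ∀ᵐ p ∂(ν.prod μ), f p = f₀ p.2 := by
  obtain ⟨C, hC⟩ := hfbdd
  -- the candidate: average over `b`
  set f₀ : X → ℝ := fun x => ∫ b, f (b, x) ∂ν with hf₀def
  have hf₀sm : StronglyMeasurable f₀ := hf.stronglyMeasurable.integral_prod_left'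
  have hf₀ : Measurable f₀ := hf₀sm.measurable
  have hf₀bdd : ∀ x, |f₀ x| ≤ C := by
    intro x
    rw [← Real.norm_eq_abs]
    show ‖∫ b, f (b, x) ∂ν‖ ≤ C
    have := norm_integral_le_of_norm_le_const (μ := ν) (f := fun b => f (b, x)) (C := C)
      (ae_of_all _ fun b => by rw [Real.norm_eq_abs]; exact hC (b, x))
    simpa using this
  -- slice integrability
  have hslice : ∀ b : B, Integrable (fun x => f (b, x)) μ := by
    intro b
    refine Integrable.mono' (integrable_const C)
      ((hf.comp measurable_prodMk_left).aestronglyMeasurable) (ae_of_all _ fun x => ?_)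
    rw [Real.norm_eq_abs]; exact hC (b, x)
  have hf₀int : Integrable f₀ μ := by
    refine Integrable.mono' (integrable_const C) hf₀.aestronglyMeasurable
      (ae_of_all _ fun x => ?_)
    rw [Real.norm_eq_abs]; exact hf₀bdd x
  -- key: for every measurable set `s`, a.e. `b` the set integrals agree
  have key : ∀ s : Set X, MeasurableSet s →
      ∀ᵐ b ∂ν, ∫ x in s, f (b, x) ∂μ = ∫ x in s, f₀ x ∂μ := by
    intro s hs
    set y : X → ℝ := s.indicator 1 with hy
    have hymeas : Measurable y := measurable_one.indicator hs
    have hybdd : ∀ x, |y x| ≤ 1 := by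
      intro x
      by_cases hx : x ∈ s <;> simp [hy, Set.indicator, hx]
    obtain ⟨c, hc⟩ := hconst y hymeas ⟨1, hybdd⟩
    have hyint : ∀ b, ∫ x, y x * f (b, x) ∂μ = ∫ x in s, f (b, x) ∂μ := by
      intro b
      rw [← integral_indicator hs]
      congr 1
      ext x
      by_cases hx : x ∈ s <;> simp [hy, Set.indicator, hx]
    have hc' : ∀ᵐ b ∂ν, ∫ x in s, f (b, x) ∂μ = c := by
      filter_upwards [hc] with b hb using (hyint b) ▸ hb
    -- identify `c` via Fubini
    have hintprod : Integrable f (ν.prod (μ.restrict s)) := by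
      refine Integrable.mono' (integrable_const C) hf.aestronglyMeasurable
        (ae_of_all _ fun p => ?_)
      rw [Real.norm_eq_abs]; exact hC p
    have hswap : ∫ b, ∫ x in s, f (b, x) ∂μ ∂ν = ∫ x in s, f₀ x ∂μ :=
      integral_integral_swap (f := fun b x => f (b, x)) hintprod
    have hcval : c = ∫ x in s, f₀ x ∂μ := by
      have h1 : ∫ b, ∫ x in s, f (b, x) ∂μ ∂ν = ∫ (_ : B), c ∂ν := integral_congr_ae hc'
      rw [integral_const, probReal_univ, one_smul] at h1
      rw [← h1, hswap]
    filter_upwards [hc'] with b hb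
    rw [hb, hcval]
  -- a countable π-system generating the Borel σ-algebra
  set S : Set (Set X) := generatePiSystem (MeasurableSpace.countableGeneratingSet X) with hS
  have hScount : S.Countable :=
    countable_generatePiSystem_aux MeasurableSpace.countable_countableGeneratingSet
  have hSmeas : ∀ s ∈ S, MeasurableSet s := by
    intro s hs
    exact generatePiSystem_measurableSet
      (fun t ht => MeasurableSpace.measurableSet_countableGeneratingSet ht) s hs
  have hSgen : ‹MeasurableSpace X› = MeasurableSpace.generateFrom S := by
    rw [hS, generateFrom_generatePiSystem_eq,
      MeasurableSpace.generateFrom_countableGeneratingSet]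
  have hSpi : IsPiSystem S := isPiSystem_generatePiSystem _
  -- a.e. `b`, the set integrals agree on all of `S` and on `univ`
  have hae : ∀ᵐ b ∂ν, (∀ s ∈ S, ∫ x in s, f (b, x) ∂μ = ∫ x in s, f₀ x ∂μ) ∧
      ∫ x, f (b, x) ∂μ = ∫ x, f₀ x ∂μ := by
    have h1 : ∀ᵐ b ∂ν, ∀ s ∈ S, ∫ x in s, f (b, x) ∂μ = ∫ x in s, f₀ x ∂μ :=
      (ae_ball_iff hScount).2 fun s hs => key s (hSmeas s hs)
    have h2 : ∀ᵐ b ∂ν, ∫ x, f (b, x) ∂μ = ∫ x, f₀ x ∂μ := by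
      filter_upwards [key Set.univ MeasurableSet.univ] with b hb
      simpa [Measure.restrict_univ] using hb
    filter_upwards [h1, h2] with b hb1 hb2 using ⟨hb1, hb2⟩
  -- for every such `b`, slices agree a.e.
  have hslice_eq : ∀ᵐ b ∂ν, ∀ᵐ x ∂μ, f (b, x) = f₀ x := by
    filter_upwards [hae] with b hb
    obtain ⟨hbS, hbuniv⟩ := hb
    have hall : ∀ ⦃t : Set X⦄, MeasurableSet t →
        ∫ x in t, f (b, x) ∂μ = ∫ x in t, f₀ x ∂μ := by
      refine MeasurableSpace.induction_on_inter hSgen hSpi ?_ ?_ ?_ ?_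
      · simp
      · exact fun t ht => hbS t ht
      · intro t ht hteq
        have h1 := integral_add_compl ht (hslice b)
        have h2 := integral_add_compl ht hf₀int
        have := h1.trans (hbuniv.trans h2.symm)
        rw [hteq] at this
        linarith
      · intro g hdisj hgmeas hgeq
        rw [integral_iUnion hgmeas hdisj ((hslice b).integrableOn),
          integral_iUnion hgmeas hdisj (hf₀int.integrableOn)]
        exact tsum_congr fun i => hgeq i
    exact ae_eq_of_forall_setIntegral_eq_of_sigmaFinite
      (fun s hs _ => (hslice b).integrableOn) (fun s hs _ => hf₀int.integrableOn)
      (fun s hs _ => hall hs)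
  refine ⟨f₀, hf₀, ⟨C, hf₀bdd⟩, ?_⟩
  have hmeasset : MeasurableSet {p : B × X | f p = f₀ p.2} :=
    measurableSet_eq_fun hf (hf₀.comp measurable_snd)
  rw [Measure.ae_prod_iff_ae_ae hmeasset]
  exact hslice_eq
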